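/- Let f : ℝ → ℝ be differentiable, and let b, c ∈ ℝ with b ≠ 0 be constants such that every z ∈ ℝ with f(z) = c satisfies f'(z) = b. Then the equation f(z) = c has at most one solution z ∈ ℝ. -/

import Mathlib

open Filter Set Topology

lemma aux_right (f : ℝ → ℝ) (b c w : ℝ) (hb : 0 < b)
    (hd : HasDerivAt f b w) (hfw : f w = c) :
    ∃ ε > 0, ∀ x, w < x → x < w + ε → c < f x := by
  have hs : Tendsto (slope f w) (𝓝[≠] w) (𝓝 b) :=
    hasDerivAt_iff_tendsto_slope.1 hd
  have h1 : ∀ᶠ x in 𝓝[≠] w, 0 < slope f w x := hs.eventually (eventually_gt_nhds hb)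
  have h2 : ∀ᶠ x in 𝓝[>] w, 0 < slope f w x :=
    h1.filter_mono (nhdsWithin_mono _ (fun x hx => ne_of_gt hx))
  obtain ⟨ε, hε, h⟩ := Metric.mem_nhdsWithin_iff.1 h2
  refine ⟨ε, hε, fun x hx hx' => ?_⟩
  have : 0 < slope f w x := h ⟨by rw [Metric.mem_ball, Real.dist_eq, abs_of_pos (by linarith)]; linarith, hx⟩
  rw [slope_def_field, div_pos_iff] at this
  rcases this with ⟨h1', h2'⟩ | ⟨h1', h2'⟩ <;> [linarith; linarith]

lemma aux_left (f : ℝ → ℝ) (b c w : ℝ) (hb : 0 < b)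
    (hd : HasDerivAt f b w) (hfw : f w = c) :
    ∃ ε > 0, ∀ x, w - ε < x → x < w → f x < c := by
  have hs : Tendsto (slope f w) (𝓝[≠] w) (𝓝 b) :=
    hasDerivAt_iff_tendsto_slope.1 hd
  have h1 : ∀ᶠ x in 𝓝[≠] w, 0 < slope f w x := hs.eventually (eventually_gt_nhds hb)
  have h2 : ∀ᶠ x in 𝓝[<] w, 0 < slope f w x :=
    h1.filter_mono (nhdsWithin_mono _ (fun x hx => ne_of_lt hx))
  obtain ⟨ε, hε, h⟩ := Metric.mem_nhdsWithin_iff.1 h2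
  refine ⟨ε, hε, fun x hx hx' => ?_⟩
  have : 0 < slope f w x := h ⟨by rw [Metric.mem_ball, Real.dist_eq, abs_of_neg (by linarith)]; linarith, hx'⟩
  rw [slope_def_field, div_pos_iff] at this
  rcases this with ⟨h1', h2'⟩ | ⟨h1', h2'⟩ <;> [linarith; linarith]

lemma aux_pos (f : ℝ → ℝ) (hf : Differentiable ℝ f) (b c : ℝ) (hb : 0 < b)
    (hder : ∀ z : ℝ, f z = c → deriv f z = b) :
    ∀ z₁ z₂ : ℝ, z₁ < z₂ → f z₁ = c → f z₂ = c → False := by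
  intro z₁ z₂ hlt h1 h2
  have hcont : Continuous f := hf.continuous
  have hd2 : HasDerivAt f b z₂ := by
    have := (hf z₂).hasDerivAt; rwa [hder z₂ h2] at this
  obtain ⟨δ₀, hδ₀, hL⟩ := aux_left f b c z₂ hb hd2 h2
  set δ := min δ₀ (z₂ - z₁) with hδdef
  have hδpos : 0 < δ := lt_min hδ₀ (by linarith)
  have hδle : δ ≤ z₂ - z₁ := min_le_right _ _
  have hL' : ∀ x, z₂ - δ < x → x < z₂ → f x < c := fun x hx hx' =>
    hL x (by have := min_le_left δ₀ (z₂ - z₁); linarith) hx'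
  set T : Set ℝ := {z | z ∈ Icc z₁ (z₂ - δ) ∧ f z = c} with hT
  have hTne : T.Nonempty := ⟨z₁, ⟨le_refl _, by linarith⟩, h1⟩
  have hTc : IsClosed T := by
    have : T = (Icc z₁ (z₂ - δ)) ∩ f ⁻¹' {c} := by ext x; simp [hT]
    rw [this]
    exact isClosed_Icc.inter (isClosed_singleton.preimage hcont)
  have hTbdd : BddAbove T := ⟨z₂ - δ, fun x hx => hx.1.2⟩
  set w := sSup T with hw
  have hwT : w ∈ T := hTc.csSup_mem hTne hTbdd
  obtain ⟨⟨hw1, hw2⟩, hwc⟩ := hwT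
  have hdw : HasDerivAt f b w := by
    have := (hf w).hasDerivAt; rwa [hder w hwc] at this
  obtain ⟨ε, hε, hR⟩ := aux_right f b c w hb hdw hwc
  -- pick u in (w, w+ε) with u < z₂
  set u := min (w + ε / 2) ((w + z₂) / 2) with hu
  have huw : w < u := lt_min (by linarith) (by nlinarith [hw2, hδpos])
  have huz2 : u < z₂ := lt_of_le_of_lt (min_le_right _ _) (by nlinarith [hw2, hδpos])
  have hfu : c < f u := hR u huw (lt_of_le_of_lt (min_le_left _ _) (by linarith))
  -- u ≤ z₂ - δ, else contradiction with hL'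
  have hule : u ≤ z₂ - δ := by
    by_contra hcon; push_neg at hcon
    exact absurd (hL' u hcon huz2) (by linarith)
  -- v in (z₂-δ, z₂) with f v < c
  set v := z₂ - δ / 2 with hv
  have hfv : f v < c := hL' v (by simp [hv]; linarith) (by simp [hv]; linarith)
  have huv : u < v := by simp [hv]; linarith
  -- IVT
  have : c ∈ f '' Icc u v := by
    apply intermediate_value_Icc' (le_of_lt huv) (hcont.continuousOn)
    exact ⟨le_of_lt hfv, le_of_lt hfu⟩
  obtain ⟨p, ⟨hpu, hpv⟩, hpc⟩ := this
  have hple : p ≤ z₂ - δ := by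
    by_contra hcon; push_neg at hcon
    exact absurd hpc (ne_of_lt (hL' p hcon (by simp [hv] at hpv; linarith)))
  have hpT : p ∈ T := ⟨⟨by linarith, hple⟩, hpc⟩
  have : p ≤ w := le_csSup hTbdd hpT
  linarith

theorem rotating_waves_stmt_0 (f : ℝ → ℝ) (hf : Differentiable ℝ f)
    (b c : ℝ) (hb : b ≠ 0) (hder : ∀ z : ℝ, f z = c → deriv f z = b) :
    ∀ z₁ z₂ : ℝ, f z₁ = c → f z₂ = c → z₁ = z₂ := by
  have key : ∀ z₁ z₂ : ℝ, z₁ < z₂ → f z₁ = c → f z₂ = c → False := by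
    rcases hb.lt_or_gt with hneg | hpos
    · intro z₁ z₂ hlt h1 h2
      refine aux_pos (fun x => -f x) hf.neg (-b) (-c) (by linarith) ?_ z₁ z₂ hlt
        (by simp [h1]) (by simp [h2])
      intro z hz
      have hz' : f z = c := by have : -f z = -c := hz; linarith
      rw [deriv.fun_neg, hder z hz']
    · exact aux_pos f hf b c hpos hder
  intro z₁ z₂ h1 h2
  rcases lt_trichotomy z₁ z₂ with h | h | h
  · exact absurd (key z₁ z₂ h h1 h2) not_false
  · exact h
  · exact absurd (key z₂ z₁ h h2 h1) not_false
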